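/- Let M be a symmetric n×n real positive semidefinite matrix of rank n−1 with null space spanned by a vector v. Then adj(M) = c·vvᵀ where c = (product of nonzero eigenvalues of M)/‖v‖² > 0; in particular all diagonal entries adj(M)_{ii} are nonnegative, and adj(M)_{ii} > 0 whenever v_i ≠ 0. -/

import Mathlib

open Matrix

open Matrix Polynomial

variable {n : Type*} [Fintype n] [DecidableEq n] {R : Type*} [CommRing R]

lemma adjugate_conj_aux (U A V : Matrix n n R) (hUV : U * V = 1) (hVU : V * U = 1) :
    adjugate (U * A * V) = U * adjugate A * V := by
  have hadjU : adjugate U = U.det • V := by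
    calc adjugate U = adjugate U * (U * V) := by rw [hUV, mul_one]
    _ = (U.det • (1 : Matrix n n R)) * V := by rw [← mul_assoc, adjugate_mul]
    _ = U.det • V := by rw [smul_mul, one_mul]
  have hadjV : adjugate V = V.det • U := by
    calc adjugate V = adjugate V * (V * U) := by rw [hVU, mul_one]
    _ = (V.det • (1 : Matrix n n R)) * U := by rw [← mul_assoc, adjugate_mul]
    _ = V.det • U := by rw [smul_mul, one_mul]
  have hdet : V.det * U.det = 1 := by rw [← det_mul, hVU, det_one]
  rw [adjugate_mul_distrib, adjugate_mul_distrib, hadjU, hadjV]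
  simp only [Matrix.smul_mul, Matrix.mul_smul]
  rw [smul_smul, mul_comm U.det, hdet, one_smul, mul_assoc]

lemma charpoly_conj_aux (U A V : Matrix n n R) (hUV : U * V = 1) (hVU : V * U = 1) :
    (U * A * V).charpoly = A.charpoly := by
  let f : Matrix n n R →+* Matrix n n R[X] := (C : R →+* R[X]).mapMatrix
  have key : charmatrix (U * A * V) = f U * charmatrix A * f V := by
    unfold charmatrix
    rw [Matrix.mul_sub, Matrix.sub_mul, _root_.map_mul, _root_.map_mul]
    congr 1
    have hcomm : f U * Matrix.scalar n (X : R[X]) = Matrix.scalar n (X : R[X]) * f U := by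
      ext i j
      simp [Matrix.scalar, mul_apply, diagonal, Finset.sum_ite_eq, Finset.sum_ite_eq',
        mul_comm]
    rw [hcomm, mul_assoc, ← _root_.map_mul]
    rw [hUV]
    simp
  have hd : (f U).det * (f V).det = 1 := by
    rw [← det_mul, ← _root_.map_mul, hUV, _root_.map_one, det_one]
  rw [Matrix.charpoly, key, det_mul, det_mul, Matrix.charpoly, mul_right_comm, hd, one_mul]

lemma charpoly_diagonal_aux (μ : n → R) :
    (diagonal μ).charpoly = ∏ i, (X - C (μ i)) := by
  have : charmatrix (diagonal μ) = diagonal (fun i => X - C (μ i)) := by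
    ext i j
    by_cases h : i = j
    · subst h; simp [charmatrix_apply_eq]
    · simp [charmatrix_apply_ne _ _ _ h, diagonal_apply_ne _ h]
  rw [Matrix.charpoly, this, det_diagonal]

/-- For a symmetric positive semidefinite `n×n` real matrix of rank `n-1` with null
space spanned by `v`, the adjugate equals `c·vvᵀ` with
`c = (product of nonzero eigenvalues)/‖v‖² > 0` (the product of the nonzero eigenvalues
being `(-1)^(n-1)` times the coefficient of `X` in the characteristic polynomial); in
particular all diagonal entries of the adjugate are nonnegative, and positive wherever
`v` is nonzero. -/
theorem adjugate_of_posSemidef_rank_pred {n : ℕ} (hn : 0 < n)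
    (M : Matrix (Fin n) (Fin n) ℝ) (hsymm : Mᵀ = M) (hpsd : M.PosSemidef)
    (hrank : M.rank = n - 1) (v : Fin n → ℝ)
    (hv : LinearMap.ker M.mulVecLin = Submodule.span ℝ {v}) :
    ∃ c : ℝ,
      c = ((-1 : ℝ) ^ (n - 1) * M.charpoly.coeff 1) / ∑ i, v i ^ 2 ∧ 0 < c ∧
      M.adjugate = c • Matrix.vecMulVec v v ∧
      (∀ i, 0 ≤ M.adjugate i i) ∧ ∀ i, v i ≠ 0 → 0 < M.adjugate i i := by
  have hH : M.IsHermitian := hpsd.1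
  set μ := hH.eigenvalues with hμdef
  set U : Matrix (Fin n) (Fin n) ℝ := (hH.eigenvectorUnitary : Matrix (Fin n) (Fin n) ℝ) with hUdef
  have hUV : U * star U = 1 := (Matrix.mem_unitaryGroup_iff).mp hH.eigenvectorUnitary.2
  have hVU : star U * U = 1 := (Matrix.mem_unitaryGroup_iff').mp hH.eigenvectorUnitary.2
  have hspec : M = U * diagonal μ * star U := by
    simpa using hH.spectral_theorem
  -- unique zero eigenvalue
  have hcard : Fintype.card {i // μ i ≠ 0} = n - 1 := by
    rw [← hrank, hH.rank_eq_card_non_zero_eigs]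
  have hcard0 : Fintype.card {i // μ i = 0} = 1 := by
    have h1 : Fintype.card {i : Fin n // ¬ μ i = 0} =
        Fintype.card (Fin n) - Fintype.card {i : Fin n // μ i = 0} :=
      Fintype.card_subtype_compl _
    have h2 : Fintype.card {i : Fin n // μ i = 0} ≤ Fintype.card (Fin n) :=
      Fintype.card_subtype_le _
    simp only [Fintype.card_fin] at h1 h2
    have : Fintype.card {i : Fin n // ¬ μ i = 0} = n - 1 := hcard
    omega
  obtain ⟨⟨i0, hi0⟩, huniq⟩ := Fintype.card_eq_one_iff.mp hcard0
  have hzero : ∀ i, μ i = 0 → i = i0 := fun i hi => congrArg Subtype.val (huniq ⟨i, hi⟩)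
  set p : ℝ := ∏ j ∈ Finset.univ.erase i0, μ j with hpdef
  have hp : 0 < p := by
    refine Finset.prod_pos fun j hj => ?_
    have hj0 : j ≠ i0 := (Finset.mem_erase.mp hj).1
    exact lt_of_le_of_ne (hpsd.eigenvalues_nonneg j) (fun h => hj0 (hzero j h.symm))
  -- eigenvector for eigenvalue 0
  set w : Fin n → ℝ := fun i => U i i0 with hwdef
  have hwb : w = ⇑(hH.eigenvectorBasis i0) := by
    funext i; simp [hwdef, hUdef]
  have hMw : M *ᵥ w = 0 := by
    rw [hwb, hH.mulVec_eigenvectorBasis, show hH.eigenvalues i0 = 0 from hi0, zero_smul]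
  have hwker : w ∈ LinearMap.ker M.mulVecLin := by
    rw [LinearMap.mem_ker, mulVecLin_apply, hMw]
  rw [hv] at hwker
  obtain ⟨a, ha⟩ := Submodule.mem_span_singleton.mp hwker
  have hnorm : ∑ k, w k ^ 2 = 1 := by
    have h := congrFun (congrFun hVU i0) i0
    simp only [mul_apply, star_apply, one_apply_eq, star_trivial] at h
    rw [← h]
    exact Finset.sum_congr rfl fun k _ => (sq (w k)) ▸ rfl
  have hsum : a ^ 2 * ∑ i, v i ^ 2 = 1 := by
    rw [← hnorm, Finset.mul_sum]
    refine Finset.sum_congr rfl fun k _ => ?_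
    rw [← ha]
    simp [mul_pow]
  have ha0 : a ≠ 0 := by
    intro h; rw [h] at hsum; simp at hsum
  have hv2 : 0 < ∑ i, v i ^ 2 := by
    rcases lt_or_eq_of_le (Finset.sum_nonneg fun i _ => sq_nonneg (v i)) with h | h
    · exact h
    · rw [← h, mul_zero] at hsum; simp at hsum
  -- adjugate computation
  have hadj : M.adjugate = U * adjugate (diagonal μ) * star U := by
    conv_lhs => rw [hspec]
    rw [adjugate_conj_aux _ _ _ hUV hVU]
  have hentry : ∀ i j, M.adjugate i j = p * (w i * w j) := by
    intro i j
    rw [hadj, adjugate_diagonal, mul_apply]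
    rw [Finset.sum_eq_single i0]
    · simp only [mul_diagonal, star_apply, star_trivial, hpdef, hwdef]
      ring
    · intro k _ hk
      have hzk : (∏ j ∈ Finset.univ.erase k, μ j) = 0 :=
        Finset.prod_eq_zero (Finset.mem_erase.mpr ⟨Ne.symm hk, Finset.mem_univ _⟩) hi0
      simp [mul_diagonal, hzk]
    · simp
  set c : ℝ := p * a ^ 2 with hcdef
  have ha2 : 0 < a ^ 2 := by positivity
  have hc : 0 < c := mul_pos hp ha2
  -- charpoly coefficient
  have hch : M.charpoly = ∏ i, (Polynomial.X - Polynomial.C (μ i)) := by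
    conv_lhs => rw [hspec]
    rw [charpoly_conj_aux _ _ _ hUV hVU, charpoly_diagonal_aux]
  have hcoeff : M.charpoly.coeff 1 = (-1 : ℝ) ^ (n - 1) * p := by
    rw [hch, ← Finset.mul_prod_erase _ _ (Finset.mem_univ i0), hi0, map_zero, sub_zero,
      Polynomial.coeff_X_mul, Polynomial.coeff_zero_eq_eval_zero, Polynomial.eval_prod]
    have hcarde : (Finset.univ.erase i0).card = n - 1 := by
      rw [Finset.card_erase_of_mem (Finset.mem_univ _), Finset.card_univ, Fintype.card_fin]
    calc (∏ j ∈ Finset.univ.erase i0, Polynomial.eval 0 (Polynomial.X - Polynomial.C (μ j)))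
        = ∏ j ∈ Finset.univ.erase i0, (-1 : ℝ) * μ j := by
          refine Finset.prod_congr rfl fun j _ => ?_; simp
      _ = (-1 : ℝ) ^ (n - 1) * p := by
          rw [Finset.prod_mul_distrib, Finset.prod_const, hcarde]
  have hone : ((-1 : ℝ) ^ (n - 1)) * ((-1 : ℝ) ^ (n - 1)) = 1 := by
    rw [← mul_pow]; norm_num
  refine ⟨c, ?_, hc, ?_, ?_, ?_⟩
  · rw [hcoeff, ← mul_assoc, hone, one_mul, eq_div_iff hv2.ne']
    calc c * ∑ i, v i ^ 2 = p * (a ^ 2 * ∑ i, v i ^ 2) := by ring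
      _ = p := by rw [hsum, mul_one]
  · ext i j
    rw [hentry]
    simp only [Matrix.smul_apply, vecMulVec_apply, smul_eq_mul, ← ha, hcdef]
    simp only [Pi.smul_apply, smul_eq_mul]
    ring
  · intro i
    rw [hentry]
    have := mul_self_nonneg (w i)
    nlinarith
  · intro i hvi
    rw [hentry]
    have hwi : w i = a * v i := by rw [← ha]; simp
    rw [hwi]
    have : 0 < (a * v i) * (a * v i) := mul_self_pos.mpr (mul_ne_zero ha0 hvi)
    nlinarith
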